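/- Let t ≥ 1 and b ≥ 0 be integers, T a finite non-empty subset of ℤ^b, and f : ℤ^b → ℤ any function. Then there exists a function g : ℤ^b → {0, 1, ..., t-1} such that for every x ∈ ℤ^b, ∑_{y ∈ T} g(x - y) ≡ f(x) (mod t). -/

import Mathlib

/-- deconvolution modulo `t` in `ℤ^b`: for any finite nonempty
`T ⊆ ℤ^b` and any `f`, there is `g : ℤ^b → {0,…,t-1}` with
`∑_{y ∈ T} g(x - y) ≡ f(x) (mod t)` for all `x`. -/
theorem deconvolution (t : ℕ) (ht : 1 ≤ t) (b : ℕ)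
    (T : Finset (Fin b → ℤ)) (hT : T.Nonempty)
    (f : (Fin b → ℤ) → ℤ) :
    ∃ g : (Fin b → ℤ) → ℤ,
      (∀ x, 0 ≤ g x ∧ g x ≤ (t : ℤ) - 1) ∧
      (∀ x, (∑ y ∈ T, g (x - y)) ≡ f x [ZMOD (t : ℤ)]) := by
  haveI : NeZero t := ⟨by omega⟩
  haveI : WellFoundedLT (Fin b) := inferInstance
  obtain ⟨y₀, hy₀T, hy₀max⟩ := T.exists_max_image (fun y => toLex y : (Fin b → ℤ) → Lex (Fin b → ℤ)) hT
  set F : (Fin b → ℤ) → ZMod t := fun x => ((f x : ℤ) : ZMod t) with hF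
  -- key injectivity/ordering fact
  have hne : ∀ x₀ : Fin b → ℤ, ∀ x : Fin b → ℤ, ∀ y ∈ T, x - y = x₀ - y₀ → y ≠ y₀ →
      toLex (x - y₀) < toLex (x₀ - y₀) := by
    intro x₀ x y hy hxy hyne
    have hle : toLex y < toLex y₀ :=
      lt_of_le_of_ne (hy₀max y hy) (fun h => hyne (toLex.injective h))
    have hx : x - y₀ = (x₀ - y₀) + (y - y₀) := by
      have : x = (x₀ - y₀) + y := by rw [← hxy]; ring
      rw [this]; ring
    have : toLex (x - y₀) = toLex (x₀ - y₀) + (toLex y - toLex y₀) := congrArg toLex hx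
    rw [this]
    have h0 : toLex y - toLex y₀ < 0 := sub_neg.2 hle
    calc toLex (x₀ - y₀) + (toLex y - toLex y₀) < toLex (x₀ - y₀) + 0 := by
          exact add_lt_add_right h0 _
      _ = toLex (x₀ - y₀) := add_zero _
  -- finite satisfiability
  have key : ∀ X : Finset (Fin b → ℤ), ∃ g : (Fin b → ℤ) → ZMod t,
      ∀ x ∈ X, ∑ y ∈ T, g (x - y) = F x := by
    intro X
    induction X using Finset.strongInduction with
    | _ X ih =>
      rcases X.eq_empty_or_nonempty with rfl | hX
      · exact ⟨0, by simp⟩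
      obtain ⟨x₀, hx₀X, hx₀min⟩ := X.exists_min_image (fun x => toLex (x - y₀)) hX
      obtain ⟨g, hg⟩ := ih (X.erase x₀) (Finset.erase_ssubset hx₀X)
      set g' := Function.update g (x₀ - y₀) (F x₀ - ∑ y ∈ T.erase y₀, g (x₀ - y)) with hg'
      refine ⟨g', ?_⟩
      intro x hxX
      by_cases hx : x = x₀
      · subst hx
        rw [← Finset.add_sum_erase _ _ hy₀T]
        have h1 : g' (x - y₀) = F x - ∑ y ∈ T.erase y₀, g (x - y) :=
          Function.update_self _ _ _
        have h2 : ∀ y ∈ T.erase y₀, g' (x - y) = g (x - y) := by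
          intro y hy
          obtain ⟨hyne, hyT⟩ := Finset.mem_erase.1 hy
          apply Function.update_of_ne _ _ _
          intro hxy
          exact hyne (sub_right_injective hxy)
        rw [h1, Finset.sum_congr rfl h2]
        ring
      · have hxE : x ∈ X.erase x₀ := Finset.mem_erase.2 ⟨hx, hxX⟩
        have h2 : ∀ y ∈ T, g' (x - y) = g (x - y) := by
          intro y hy
          apply Function.update_of_ne _ _ _
          intro hxy
          by_cases hyne : y = y₀
          · subst hyne
            exact hx (sub_left_injective hxy)
          · exact absurd (hx₀min x hxX) (not_le.2 (hne x₀ x y hy hxy hyne))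
        rw [Finset.sum_congr rfl h2]
        exact hg x hxE
  -- choose finite solutions
  choose gX hgX using key
  -- ultrafilter extending atTop on Finset (Fin b → ℤ)
  obtain ⟨U, hU⟩ := Filter.exists_ultrafilter_le (Filter.atTop : Filter (Finset (Fin b → ℤ)))
  -- limit function
  have hlim : ∀ z : Fin b → ℤ, ∃ v : ZMod t, {X | gX X z = v} ∈ U := by
    intro z
    have : (⋃ v ∈ (Set.univ : Set (ZMod t)), {X | gX X z = v}) ∈ U := by
      have : (⋃ v ∈ (Set.univ : Set (ZMod t)), {X | gX X z = v}) = Set.univ := by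
        ext X; simp
      rw [this]; exact Filter.univ_mem
    obtain ⟨v, _, hv⟩ := (Ultrafilter.finite_biUnion_mem_iff Set.finite_univ).1 this
    exact ⟨v, hv⟩
  choose gR hgR using hlim
  -- gR satisfies all constraints
  have hgRall : ∀ x : Fin b → ℤ, ∑ y ∈ T, gR (x - y) = F x := by
    intro x
    have h1 : {X : Finset (Fin b → ℤ) | x ∈ X} ∈ U := by
      apply hU
      have := Filter.mem_atTop ({x} : Finset (Fin b → ℤ))
      refine Filter.mem_of_superset this ?_
      intro X hX
      exact Finset.singleton_subset_iff.1 hX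
    have h2 : (⋂ y ∈ (T : Set (Fin b → ℤ)), {X | gX X (x - y) = gR (x - y)}) ∈ U :=
      (Filter.biInter_mem T.finite_toSet).2 fun y _ => hgR (x - y)
    have h3 : ({X : Finset (Fin b → ℤ) | x ∈ X} ∩
        ⋂ y ∈ (T : Set (Fin b → ℤ)), {X | gX X (x - y) = gR (x - y)}).Nonempty :=
      Ultrafilter.nonempty_of_mem (Filter.inter_mem h1 h2)
    obtain ⟨X, hX1, hX2⟩ := h3
    have hXsol := hgX X x hX1
    rw [← hXsol]
    apply Finset.sum_congr rfl
    intro y hy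
    have := Set.mem_iInter₂.1 hX2 y (by exact_mod_cast hy)
    exact this.symm
  -- convert to integers
  refine ⟨fun z => ((gR z).val : ℤ), ?_, ?_⟩
  · intro x
    refine ⟨Int.ofNat_nonneg _, ?_⟩
    show ((gR x).val : ℤ) ≤ (t : ℤ) - 1
    have := (gR x).val_lt
    omega
  · intro x
    have hcast : ((∑ y ∈ T, ((gR (x - y)).val : ℤ) : ℤ) : ZMod t) = ((f x : ℤ) : ZMod t) := by
      push_cast
      rw [show ((f x : ℤ) : ZMod t) = F x from rfl, ← hgRall x]
      exact Finset.sum_congr rfl fun y _ => by simp [ZMod.natCast_val, ZMod.cast_id]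
    exact (ZMod.intCast_eq_intCast_iff' _ _ _).1 hcast
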